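/- The ℤ/2-cohomology obstruction: for the lattice map ℤ → ℤ^{n+1}, 1 ↦ (1,…,1), with the swap involution on the last two coordinates acting trivially on the source, the connecting map in group cohomology H⁰(ℤ/2, Λ ⊗ ℝ/ℤ) → H¹(ℤ/2, ℝ/ℤ) (from the short exact sequence 0 → ℝ/ℤ → (ℝ/ℤ)^{n+1} → Λ ⊗ ℝ/ℤ → 0 of ℤ/2-modules) is zero if n > 1 and surjective onto ℤ/2 if n = 1. -/
import Mathlib


/- STATEMENT 17: For Λ = ℤ^{n+1}/ℤ(1,…,1) and the ℤ/2-action on (ℝ/ℤ)^{n+1} swapping the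
last two coordinates (trivial on the diagonal ℝ/ℤ), the connecting map
H⁰(ℤ/2, Λ ⊗ ℝ/ℤ) → H¹(ℤ/2, ℝ/ℤ) ≅ ℤ/2 of the sequence
0 → ℝ/ℤ → (ℝ/ℤ)^{n+1} → Λ ⊗ ℝ/ℤ → 0 is zero if n > 1 and surjective onto ℤ/2 if n = 1.
Concretely (cocycle description): H⁰ consists of classes of y ∈ (ℝ/ℤ)^{n+1} with
σy − y = const c a diagonal element; the connecting map sends such a class to
c ∈ ℝ/ℤ[2] ≅ H¹(ℤ/2, ℝ/ℤ) (independent of the lift y).  So the claim is: if n > 1 then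
any such c is 0, while if n = 1 every 2-torsion c ∈ ℝ/ℤ arises this way. -/

noncomputable section

abbrev Circle1 : Type := AddCircle (1 : ℝ)

/-- The ℤ/2-action: swapping the last two coordinates of (ℝ/ℤ)^{n+1}. -/
def swapLastS (n : ℕ) : (Fin (n + 1) → Circle1) →ₗ[ℤ] (Fin (n + 1) → Circle1) :=
  LinearMap.funLeft ℤ Circle1 (Equiv.swap ⟨n - 1, by omega⟩ ⟨n, by omega⟩)

theorem stmt17 (n : ℕ) (hn : 0 < n) :
    -- if n > 1 the connecting map is zero: every value c of a connecting cocycle vanishes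
    (1 < n → ∀ (y : Fin (n + 1) → Circle1) (c : Circle1),
      swapLastS n y - y = (fun _ => c) → c = 0) ∧
    -- if n = 1 the connecting map is surjective onto H¹(ℤ/2, ℝ/ℤ) ≅ ℤ/2, the 2-torsion
    -- subgroup of ℝ/ℤ: every 2-torsion c arises from some y
    (n = 1 → ∀ c : Circle1, (2 : ℤ) • c = 0 →
      ∃ y : Fin (n + 1) → Circle1, swapLastS n y - y = fun _ => c) := by
  constructor
  · intro hn1 y c h
    have h0 := congrFun h ⟨0, by omega⟩
    simp only [swapLastS, LinearMap.funLeft_apply, Pi.sub_apply] at h0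
    rw [Equiv.swap_apply_of_ne_of_ne (by simp [Fin.ext_iff]; omega)
      (by simp [Fin.ext_iff]; omega)] at h0
    simpa using h0.symm
  · intro hn1 c hc
    subst hn1
    have hcc : c + c = 0 := by
      have := hc; rw [two_smul] at this; exact this
    refine ⟨![0, c], ?_⟩
    funext i
    fin_cases i <;>
      simp [swapLastS, LinearMap.funLeft_apply, Equiv.swap_apply_def, Fin.ext_iff] <;>
      first
        | rfl
        | (rw [show (0 : Circle1) - c = -c from zero_sub c, neg_eq_of_add_eq_zero_left hcc])
        | exact neg_eq_of_add_eq_zero_left hcc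

end
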